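/- arXiv:1601.01308 — 2 statements merged into one kernel-verified Lean document; each statement's English description precedes it below -/
import Mathlib

section
/- Let n ≥ 3 be an integer and let k be a field of characteristic different from 2 containing a primitive n-th root of unity. Let I = ⟨x(yⁿ−zⁿ), y(zⁿ−xⁿ), z(xⁿ−yⁿ)⟩ ⊆ k[x,y,z] and let Fₙ = (xⁿ−yⁿ)(yⁿ−zⁿ)(zⁿ−xⁿ). Then Fₙ ∉ I². -/
open MvPolynomial

/-- The exponent vector `(a, b, c)` as a `Finsupp` on `Fin 3`. -/
noncomputable def HSmono (a b c : ℕ) : Fin 3 →₀ ℕ :=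
  Finsupp.single 0 a + Finsupp.single 1 b + Finsupp.single 2 c

lemma HSmono_apply0 (a b c : ℕ) : HSmono a b c 0 = a := by
  simp [HSmono, Finsupp.single_apply]
lemma HSmono_apply1 (a b c : ℕ) : HSmono a b c 1 = b := by
  simp [HSmono, Finsupp.single_apply]
lemma HSmono_apply2 (a b c : ℕ) : HSmono a b c 2 = c := by
  simp [HSmono, Finsupp.single_apply]

lemma HSmono_le_iff (a b c a' b' c' : ℕ) :
    HSmono a' b' c' ≤ HSmono a b c ↔ a' ≤ a ∧ b' ≤ b ∧ c' ≤ c := by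
  constructor
  · intro h
    exact ⟨by simpa [HSmono_apply0] using h 0, by simpa [HSmono_apply1] using h 1,
      by simpa [HSmono_apply2] using h 2⟩
  · rintro ⟨h1, h2, h3⟩ i
    fin_cases i <;> simpa [HSmono_apply0, HSmono_apply1, HSmono_apply2]

lemma HSmono_sub (a b c a' b' c' : ℕ) :
    HSmono a b c - HSmono a' b' c' = HSmono (a - a') (b - b') (c - c') := by
  ext i
  fin_cases i <;>
    simp [Finsupp.tsub_apply, HSmono_apply0, HSmono_apply1, HSmono_apply2]

lemma HS_X_prod {k : Type*} [CommRing k] (a b c : ℕ) :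
    (X 0 ^ a * X 1 ^ b * X 2 ^ c : MvPolynomial (Fin 3) k)
      = monomial (HSmono a b c) 1 := by
  rw [HSmono, X_pow_eq_monomial, X_pow_eq_monomial, X_pow_eq_monomial,
    monomial_mul, monomial_mul, one_mul, one_mul]

/-- Extraction lemma: the coefficient of `x^a y^b z^c` in `p · x^a' y^b' z^c'`. -/
lemma HS_coeff_extract {k : Type*} [CommRing k] (p : MvPolynomial (Fin 3) k)
    {a b c a' b' c' : ℕ} (h1 : a' ≤ a) (h2 : b' ≤ b) (h3 : c' ≤ c) :
    coeff (HSmono a b c) (p * (X 0 ^ a' * X 1 ^ b' * X 2 ^ c'))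
      = coeff (HSmono (a - a') (b - b') (c - c')) p := by
  rw [HS_X_prod, coeff_mul_monomial', if_pos ((HSmono_le_iff _ _ _ _ _ _).mpr ⟨h1, h2, h3⟩),
    HSmono_sub, mul_one]

/-- Vanishing lemma: if some exponent of the monomial factor exceeds the target. -/
lemma HS_coeff_vanish {k : Type*} [CommRing k] (p : MvPolynomial (Fin 3) k)
    {a b c a' b' c' : ℕ} (h : a < a' ∨ b < b' ∨ c < c') :
    coeff (HSmono a b c) (p * (X 0 ^ a' * X 1 ^ b' * X 2 ^ c')) = 0 := by
  rw [HS_X_prod, coeff_mul_monomial', if_neg]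
  rw [HSmono_le_iff]
  omega

/-- **Harbourne–Seceleanu.** Let `k` be a field of characteristic `≠ 2` containing a
primitive `n`-th root of unity, `n ≥ 3`. For the Fermat ideal
`I = ⟨x(yⁿ−zⁿ), y(zⁿ−xⁿ), z(xⁿ−yⁿ)⟩ ⊆ k[x,y,z]`, the polynomial
`Fₙ = (xⁿ−yⁿ)(yⁿ−zⁿ)(zⁿ−xⁿ)` does not lie in `I²`. -/
theorem fermat_polynomial_not_mem_sq {k : Type*} [Field k] (hchar : ringChar k ≠ 2)
    (n : ℕ) (hn : 3 ≤ n) (η : k) (hη : IsPrimitiveRoot η n) :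
    ((X 0 ^ n - X 1 ^ n) * (X 1 ^ n - X 2 ^ n) * (X 2 ^ n - X 0 ^ n)
        : MvPolynomial (Fin 3) k)
      ∉ (Ideal.span {X 0 * (X 1 ^ n - X 2 ^ n), X 1 * (X 2 ^ n - X 0 ^ n),
          X 2 * (X 0 ^ n - X 1 ^ n)} : Ideal (MvPolynomial (Fin 3) k)) ^ 2 := by
  intro hmem
  set R := MvPolynomial (Fin 3) k
  set g1 : R := X 0 * (X 1 ^ n - X 2 ^ n) with hg1
  set g2 : R := X 1 * (X 2 ^ n - X 0 ^ n) with hg2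
  set g3 : R := X 2 * (X 0 ^ n - X 1 ^ n) with hg3
  -- The ideal of polynomials `f` with `coeff m1 (h f) = coeff m2 (h f)` for all `h`.
  let J : Ideal R :=
    { carrier := {f | ∀ h : R, coeff (HSmono n (2 * n) 0) (h * f) = coeff (HSmono n 0 (2 * n)) (h * f)}
      add_mem' := by
        intro p q hp hq h
        simp only [Set.mem_setOf_eq] at hp hq ⊢
        rw [mul_add, coeff_add, coeff_add, hp h, hq h]
      zero_mem' := by intro h; simp
      smul_mem' := by
        intro c p hp h
        simp only [Set.mem_setOf_eq, smul_eq_mul] at hp ⊢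
        rw [← mul_assoc]
        exact hp (h * c) }
  have key11 : (g1 * g1) ∈ J := by
    intro h
    have e : g1 * g1 = X 0 ^ 2 * X 1 ^ (2 * n) * X 2 ^ 0
        - 2 * (X 0 ^ 2 * X 1 ^ n * X 2 ^ n) + X 0 ^ 2 * X 1 ^ 0 * X 2 ^ (2 * n) := by
      rw [hg1]; ring
    rw [e, mul_add, mul_sub, ← mul_assoc h 2]
    rw [coeff_add, coeff_add, coeff_sub, coeff_sub]
    rw [HS_coeff_extract _ (by omega) le_rfl le_rfl,
        HS_coeff_vanish _ (by omega),
        HS_coeff_vanish _ (by omega),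
        HS_coeff_vanish _ (by omega),
        HS_coeff_vanish _ (by omega),
        HS_coeff_extract _ (by omega) le_rfl le_rfl]
    simp [Nat.sub_self]
  have key22 : (g2 * g2) ∈ J := by
    intro h
    have e : g2 * g2 = X 0 ^ 0 * X 1 ^ 2 * X 2 ^ (2 * n)
        - 2 * (X 0 ^ n * X 1 ^ 2 * X 2 ^ n) + X 0 ^ (2 * n) * X 1 ^ 2 * X 2 ^ 0 := by
      rw [hg2]; ring
    rw [e, mul_add, mul_sub, ← mul_assoc h 2]
    rw [coeff_add, coeff_add, coeff_sub, coeff_sub]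
    rw [HS_coeff_vanish _ (by omega), HS_coeff_vanish _ (by omega),
        HS_coeff_vanish _ (by omega), HS_coeff_vanish _ (by omega),
        HS_coeff_vanish _ (by omega), HS_coeff_vanish _ (by omega)]
  have key33 : (g3 * g3) ∈ J := by
    intro h
    have e : g3 * g3 = X 0 ^ (2 * n) * X 1 ^ 0 * X 2 ^ 2
        - 2 * (X 0 ^ n * X 1 ^ n * X 2 ^ 2) + X 0 ^ 0 * X 1 ^ (2 * n) * X 2 ^ 2 := by
      rw [hg3]; ring
    rw [e, mul_add, mul_sub, ← mul_assoc h 2]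
    rw [coeff_add, coeff_add, coeff_sub, coeff_sub]
    rw [HS_coeff_vanish _ (by omega), HS_coeff_vanish _ (by omega),
        HS_coeff_vanish _ (by omega), HS_coeff_vanish _ (by omega),
        HS_coeff_vanish _ (by omega), HS_coeff_vanish _ (by omega)]
  have key12 : (g1 * g2) ∈ J := by
    intro h
    have e : g1 * g2 = X 0 ^ 1 * X 1 ^ (n + 1) * X 2 ^ n
        - X 0 ^ (n + 1) * X 1 ^ (n + 1) * X 2 ^ 0
        - X 0 ^ 1 * X 1 ^ 1 * X 2 ^ (2 * n)
        + X 0 ^ (n + 1) * X 1 ^ 1 * X 2 ^ n := by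
      rw [hg1, hg2]; ring
    rw [e, mul_add, mul_sub, mul_sub]
    rw [coeff_add, coeff_sub, coeff_sub, coeff_add, coeff_sub, coeff_sub]
    rw [HS_coeff_vanish _ (by omega), HS_coeff_vanish _ (by omega),
        HS_coeff_vanish _ (by omega), HS_coeff_vanish _ (by omega),
        HS_coeff_vanish _ (by omega), HS_coeff_vanish _ (by omega),
        HS_coeff_vanish _ (by omega), HS_coeff_vanish _ (by omega)]
  have key13 : (g1 * g3) ∈ J := by
    intro h
    have e : g1 * g3 = X 0 ^ (n + 1) * X 1 ^ n * X 2 ^ 1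
        - X 0 ^ 1 * X 1 ^ (2 * n) * X 2 ^ 1
        - X 0 ^ (n + 1) * X 1 ^ 0 * X 2 ^ (n + 1)
        + X 0 ^ 1 * X 1 ^ n * X 2 ^ (n + 1) := by
      rw [hg1, hg3]; ring
    rw [e, mul_add, mul_sub, mul_sub]
    rw [coeff_add, coeff_sub, coeff_sub, coeff_add, coeff_sub, coeff_sub]
    rw [HS_coeff_vanish _ (by omega), HS_coeff_vanish _ (by omega),
        HS_coeff_vanish _ (by omega), HS_coeff_vanish _ (by omega),
        HS_coeff_vanish _ (by omega), HS_coeff_vanish _ (by omega),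
        HS_coeff_vanish _ (by omega), HS_coeff_vanish _ (by omega)]
  have key23 : (g2 * g3) ∈ J := by
    intro h
    have e : g2 * g3 = X 0 ^ n * X 1 ^ 1 * X 2 ^ (n + 1)
        - X 0 ^ 0 * X 1 ^ (n + 1) * X 2 ^ (n + 1)
        - X 0 ^ (2 * n) * X 1 ^ 1 * X 2 ^ 1
        + X 0 ^ n * X 1 ^ (n + 1) * X 2 ^ 1 := by
      rw [hg2, hg3]; ring
    rw [e, mul_add, mul_sub, mul_sub]
    rw [coeff_add, coeff_sub, coeff_sub, coeff_add, coeff_sub, coeff_sub]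
    rw [HS_coeff_vanish _ (by omega), HS_coeff_vanish _ (by omega),
        HS_coeff_vanish _ (by omega), HS_coeff_vanish _ (by omega),
        HS_coeff_vanish _ (by omega), HS_coeff_vanish _ (by omega),
        HS_coeff_vanish _ (by omega), HS_coeff_vanish _ (by omega)]
  -- Hence `F ∈ J`.
  have hFJ : ((X 0 ^ n - X 1 ^ n) * (X 1 ^ n - X 2 ^ n) * (X 2 ^ n - X 0 ^ n) : R) ∈ J := by
    rw [sq, Ideal.span_mul_span'] at hmem
    refine Ideal.span_le.mpr ?_ hmem
    rintro f hf
    rcases Set.mem_mul.mp hf with ⟨a, ha, b, hb, rfl⟩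
    simp only [Set.mem_insert_iff, Set.mem_singleton_iff] at ha hb
    rcases ha with rfl | rfl | rfl <;> rcases hb with rfl | rfl | rfl
    · exact key11
    · exact key12
    · exact key13
    · rw [mul_comm]; exact key12
    · exact key22
    · exact key23
    · rw [mul_comm]; exact key13
    · rw [mul_comm]; exact key23
    · exact key33
  -- Conclude by comparing the two chosen coefficients of `F`.
  have hone := hFJ 1
  have eF : (1 : R) * ((X 0 ^ n - X 1 ^ n) * (X 1 ^ n - X 2 ^ n) * (X 2 ^ n - X 0 ^ n))
      = -(1 * (X 0 ^ (2 * n) * X 1 ^ n * X 2 ^ 0))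
        + 1 * (X 0 ^ (2 * n) * X 1 ^ 0 * X 2 ^ n)
        + 1 * (X 0 ^ n * X 1 ^ (2 * n) * X 2 ^ 0)
        - 1 * (X 0 ^ n * X 1 ^ 0 * X 2 ^ (2 * n))
        - 1 * (X 0 ^ 0 * X 1 ^ (2 * n) * X 2 ^ n)
        + 1 * (X 0 ^ 0 * X 1 ^ n * X 2 ^ (2 * n)) := by ring
  rw [eF] at hone
  repeat (first | rw [coeff_add] at hone | rw [coeff_sub] at hone | rw [coeff_neg] at hone)
  rw [HS_coeff_vanish _ (by omega), HS_coeff_vanish _ (by omega),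
      HS_coeff_extract _ (by omega) (by omega) (by omega),
      HS_coeff_vanish _ (by omega), HS_coeff_vanish _ (by omega),
      HS_coeff_vanish _ (by omega),
      HS_coeff_vanish _ (by omega), HS_coeff_vanish _ (by omega),
      HS_coeff_vanish _ (by omega),
      HS_coeff_extract _ (by omega) (by omega) (by omega),
      HS_coeff_vanish _ (by omega), HS_coeff_vanish _ (by omega)] at hone
  have hc1 : coeff (HSmono (n - n) (2 * n - 2 * n) (0 - 0)) (1 : R) = 1 := by
    have h0 : HSmono (n - n) (2 * n - 2 * n) (0 - 0) = 0 := by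
      ext i; fin_cases i <;> simp [HSmono_apply0, HSmono_apply1, HSmono_apply2]
    rw [h0]; simp
  have hc2 : coeff (HSmono (n - n) (0 - 0) (2 * n - 2 * n)) (1 : R) = 1 := by
    have h0 : HSmono (n - n) (0 - 0) (2 * n - 2 * n) = 0 := by
      ext i; fin_cases i <;> simp [HSmono_apply0, HSmono_apply1, HSmono_apply2]
    rw [h0]; simp
  rw [hc1, hc2] at hone
  have h1 : (-1 : k) = 1 := by linear_combination -hone
  exact Ring.neg_one_ne_one_of_char_ne_two hchar h1
end

section
/- Let n ≥ 3 be an integer and let k be a field of characteristic different from 2 containing a primitive n-th root of unity η. Let Z ⊂ ℙ²(k) be the set consisting of the three coordinate points (1:0:0), (0:1:0), (0:0:1) together with the n² points Q_{a,b} = (1:ηᵃ:ηᵇ) for 1 ≤ a,b ≤ n. Then the polynomial Fₙ = (xⁿ−yⁿ)(yⁿ−zⁿ)(zⁿ−xⁿ) lies in the third symbolic power I(Z)^(3) = ⋂_{P∈Z} I(P)³. -/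
open MvPolynomial

/-- The homogeneous vanishing ideal of the point of `ℙ²(k)` with representative `v`:
all polynomials vanishing on the line `k·v`. -/
def pointIdeal {k : Type*} [CommRing k] {σ : Type*} (v : σ → k) :
    Ideal (MvPolynomial σ k) where
  carrier := {f | ∀ t : k, MvPolynomial.eval (t • v) f = 0}
  zero_mem' := fun t => map_zero _
  add_mem' := fun ha hb t => by rw [map_add, ha t, hb t, add_zero]
  smul_mem' := fun c x hx t => by rw [smul_eq_mul, map_mul, hx t, mul_zero]

/-- Representatives of the points of the Fermat configuration in `ℙ²(k)`:
the three coordinate points together with the `n²` points `(1 : ηᵃ : ηᵇ)`,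
`1 ≤ a, b ≤ n`. -/
def fermatConfig {k : Type*} [Field k] (η : k) (n : ℕ) : Set (Fin 3 → k) :=
  {![1, 0, 0], ![0, 1, 0], ![0, 0, 1]} ∪
    {v | ∃ a, 1 ≤ a ∧ a ≤ n ∧ ∃ b, 1 ≤ b ∧ b ≤ n ∧ v = ![1, η ^ a, η ^ b]}

/-- For the Fermat configuration `Z ⊂ ℙ²(k)` (char `k ≠ 2`, `η` a primitive `n`-th root
of unity, `n ≥ 3`), the polynomial `Fₙ = (xⁿ−yⁿ)(yⁿ−zⁿ)(zⁿ−xⁿ)` lies in the third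
symbolic power `I(Z)^(3) = ⋂_{P ∈ Z} I(P)³`. -/
theorem fermat_polynomial_mem_symbolic_cube {k : Type*} [Field k]
    (hchar : ringChar k ≠ 2) (n : ℕ) (hn : 3 ≤ n) (η : k) (hη : IsPrimitiveRoot η n) :
    ((X 0 ^ n - X 1 ^ n) * (X 1 ^ n - X 2 ^ n) * (X 2 ^ n - X 0 ^ n)
        : MvPolynomial (Fin 3) k)
      ∈ ⨅ v ∈ fermatConfig η n, (pointIdeal v) ^ 3 := by

  have key : ∀ v ∈ fermatConfig η n,
      ((X 0 ^ n - X 1 ^ n) * (X 1 ^ n - X 2 ^ n) * (X 2 ^ n - X 0 ^ n)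
        : MvPolynomial (Fin 3) k) ∈ (pointIdeal v) ^ 3 := by
    intro v hv
    have hηn : η ^ n = 1 := hη.pow_eq_one
    rcases hv with (rfl | rfl | rfl) | ⟨a, _, _, b, _, _, rfl⟩
    · -- v = ![1,0,0]
      have h1 : (X 1 : MvPolynomial (Fin 3) k) ∈ pointIdeal (![1,0,0] : Fin 3 → k) := by
        intro t; simp [pointIdeal, Pi.smul_apply]
      have h2 : (X 2 : MvPolynomial (Fin 3) k) ∈ pointIdeal (![1,0,0] : Fin 3 → k) := by
        intro t; simp [pointIdeal, Pi.smul_apply]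
      have hB : (X 1 ^ n - X 2 ^ n : MvPolynomial (Fin 3) k)
          ∈ (pointIdeal (![1,0,0] : Fin 3 → k)) ^ 3 := by
        have e1 : (X 1 : MvPolynomial (Fin 3) k) ^ n = X 1 ^ 3 * X 1 ^ (n - 3) := by
          rw [← pow_add]; congr 1; omega
        have e2 : (X 2 : MvPolynomial (Fin 3) k) ^ n = X 2 ^ 3 * X 2 ^ (n - 3) := by
          rw [← pow_add]; congr 1; omega
        rw [e1, e2]
        exact sub_mem (Ideal.mul_mem_right _ _ (Ideal.pow_mem_pow h1 3))
          (Ideal.mul_mem_right _ _ (Ideal.pow_mem_pow h2 3))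
      exact Ideal.mul_mem_right _ _ (Ideal.mul_mem_left _ _ hB)
    · -- v = ![0,1,0]
      have h0 : (X 0 : MvPolynomial (Fin 3) k) ∈ pointIdeal (![0,1,0] : Fin 3 → k) := by
        intro t; simp [pointIdeal, Pi.smul_apply]
      have h2 : (X 2 : MvPolynomial (Fin 3) k) ∈ pointIdeal (![0,1,0] : Fin 3 → k) := by
        intro t; simp [pointIdeal, Pi.smul_apply]
      have hC : (X 2 ^ n - X 0 ^ n : MvPolynomial (Fin 3) k)
          ∈ (pointIdeal (![0,1,0] : Fin 3 → k)) ^ 3 := by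
        have e1 : (X 2 : MvPolynomial (Fin 3) k) ^ n = X 2 ^ 3 * X 2 ^ (n - 3) := by
          rw [← pow_add]; congr 1; omega
        have e2 : (X 0 : MvPolynomial (Fin 3) k) ^ n = X 0 ^ 3 * X 0 ^ (n - 3) := by
          rw [← pow_add]; congr 1; omega
        rw [e1, e2]
        exact sub_mem (Ideal.mul_mem_right _ _ (Ideal.pow_mem_pow h2 3))
          (Ideal.mul_mem_right _ _ (Ideal.pow_mem_pow h0 3))
      exact Ideal.mul_mem_left _ _ hC
    · -- v = ![0,0,1]
      have h0 : (X 0 : MvPolynomial (Fin 3) k) ∈ pointIdeal (![0,0,1] : Fin 3 → k) := by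
        intro t; simp [pointIdeal, Pi.smul_apply]
      have h1 : (X 1 : MvPolynomial (Fin 3) k) ∈ pointIdeal (![0,0,1] : Fin 3 → k) := by
        intro t; simp [pointIdeal, Pi.smul_apply]
      have hA : (X 0 ^ n - X 1 ^ n : MvPolynomial (Fin 3) k)
          ∈ (pointIdeal (![0,0,1] : Fin 3 → k)) ^ 3 := by
        have e1 : (X 0 : MvPolynomial (Fin 3) k) ^ n = X 0 ^ 3 * X 0 ^ (n - 3) := by
          rw [← pow_add]; congr 1; omega
        have e2 : (X 1 : MvPolynomial (Fin 3) k) ^ n = X 1 ^ 3 * X 1 ^ (n - 3) := by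
          rw [← pow_add]; congr 1; omega
        rw [e1, e2]
        exact sub_mem (Ideal.mul_mem_right _ _ (Ideal.pow_mem_pow h0 3))
          (Ideal.mul_mem_right _ _ (Ideal.pow_mem_pow h1 3))
      exact Ideal.mul_mem_right _ _ (Ideal.mul_mem_right _ _ hA)
    · -- v = ![1, η^a, η^b]
      set I := pointIdeal (![1, η ^ a, η ^ b] : Fin 3 → k) with hI
      have hpow : ∀ c : ℕ, ∀ t : k, (t * η ^ c) ^ n = t ^ n := by
        intro c t
        rw [mul_pow, ← pow_mul, mul_comm c n, pow_mul, hηn, one_pow, mul_one]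
      have hA : (X 0 ^ n - X 1 ^ n : MvPolynomial (Fin 3) k) ∈ I := by
        intro t
        simp only [map_sub, map_pow, eval_X, Pi.smul_apply, smul_eq_mul,
          Matrix.cons_val_zero, Matrix.cons_val_one, Matrix.head_cons]
        rw [hpow a t, mul_one, sub_self]
      have hB : (X 1 ^ n - X 2 ^ n : MvPolynomial (Fin 3) k) ∈ I := by
        intro t
        simp only [map_sub, map_pow, eval_X, Pi.smul_apply, smul_eq_mul,
          Matrix.cons_val_one, Matrix.head_cons, Matrix.cons_val_two, Matrix.tail_cons,
          Matrix.cons_val_zero]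
        rw [hpow a t, hpow b t, sub_self]
      have hC : (X 2 ^ n - X 0 ^ n : MvPolynomial (Fin 3) k) ∈ I := by
        intro t
        simp only [map_sub, map_pow, eval_X, Pi.smul_apply, smul_eq_mul,
          Matrix.cons_val_zero, Matrix.cons_val_two, Matrix.tail_cons, Matrix.head_cons]
        rw [hpow b t, mul_one, sub_self]
      have h3 : I ^ 3 = I * I * I := by
        rw [pow_succ, pow_succ, pow_one]
      rw [h3]
      exact Ideal.mul_mem_mul (Ideal.mul_mem_mul hA hB) hC
  simpa only [Ideal.mem_iInf] using key
end
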